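/- Let k > 0 and let c : [0,∞) → ℝ be continuous with 0 < δ ≤ c(t) ≤ M for all t ≥ 0, for some constants δ, M. If η : [0,∞) → ℝ is differentiable and satisfies the closed-loop equation η'(t) = −c(t)·k·(exp(η(t)) − 1) for all t ≥ 0, then t ↦ |η(t)| is nonincreasing and η(t) → 0 as t → ∞. -/

import Mathlib

open Real Set Filter

/-- `x * (exp x - 1)` is always nonnegative. -/
lemma key1 (x : ℝ) : 0 ≤ x * (Real.exp x - 1) := by
  rcases le_or_gt 0 x with h | h
  · have : 1 ≤ Real.exp x := Real.one_le_exp h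
    exact mul_nonneg h (by linarith)
  · have : Real.exp x ≤ 1 := Real.exp_le_one_iff.mpr h.le
    nlinarith [this]

/-- Quantitative lower bound for `x * (exp x - 1)` away from the origin. -/
lemma key2 (a x : ℝ) (ha : 0 < a) (hx : a ≤ |x|) :
    a * (1 - Real.exp (-a)) ≤ x * (Real.exp x - 1) := by
  have hea : Real.exp (-a) ≤ 1 := Real.exp_le_one_iff.mpr (by linarith)
  rcases le_abs.mp hx with h | h
  · have h1 : 1 - Real.exp (-a) ≤ Real.exp x - 1 := by
      have e1 := Real.add_one_le_exp a
      have e2 := Real.add_one_le_exp (-a)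
      have e3 : Real.exp a ≤ Real.exp x := Real.exp_le_exp.mpr h
      linarith
    exact mul_le_mul h h1 (by linarith) (le_trans ha.le h)
  · have hx' : x ≤ -a := by linarith
    have h1 : 1 - Real.exp (-a) ≤ 1 - Real.exp x := by
      have := Real.exp_le_exp.mpr hx'
      linarith
    have h2 : a * (1 - Real.exp (-a)) ≤ (-x) * (1 - Real.exp x) :=
      mul_le_mul h h1 (by linarith) (by linarith)
    nlinarith [h2]

/-- Reduced scalar form of Theorem 3.6: under the feedback law, the projected
aquatic dynamics satisfy `η' = -c(t)·k·(exp(η)-1)` with `c` continuous and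
bounded between positive constants; then `|η|` is nonincreasing on `[0,∞)`
and `η(t) → 0` as `t → ∞`. -/
theorem stmt_0 (k δ M : ℝ) (hk : 0 < k) (hδ : 0 < δ)
    (c η : ℝ → ℝ)
    (hc : ContinuousOn c (Set.Ici 0))
    (hcb : ∀ t, 0 ≤ t → δ ≤ c t ∧ c t ≤ M)
    (hη : ∀ t, 0 ≤ t → HasDerivAt η (-(c t) * k * (Real.exp (η t) - 1)) t) :
    AntitoneOn (fun t => |η t|) (Set.Ici 0) ∧
      Filter.Tendsto η Filter.atTop (nhds 0) := by
  -- derivative of the square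
  have hW : ∀ t, 0 ≤ t → HasDerivAt (fun s => η s ^ 2)
      (2 * η t * (-(c t) * k * (Real.exp (η t) - 1))) t := by
    intro t ht
    have h := (hη t ht).pow 2
    refine h.congr_deriv ?_
    push_cast
    ring
  -- the square is nonincreasing
  have hWanti : AntitoneOn (fun s => η s ^ 2) (Set.Ici 0) := by
    apply antitoneOn_of_deriv_nonpos (convex_Ici 0)
    · exact fun t ht => ((hW t ht).continuousAt).continuousWithinAt
    · intro t ht
      rw [interior_Ici] at ht
      exact (hW t ht.le).differentiableAt.differentiableWithinAt
    · intro t ht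
      rw [interior_Ici] at ht
      rw [(hW t ht.le).deriv]
      have h1 := key1 (η t)
      have hc1 := (hcb t ht.le).1
      nlinarith [mul_nonneg (mul_nonneg (le_trans hδ.le hc1) hk.le) h1]
  have hAbs : AntitoneOn (fun t => |η t|) (Set.Ici 0) := by
    intro s hs t ht hst
    have h := hWanti hs ht hst
    have h2 := Real.sqrt_le_sqrt h
    rwa [Real.sqrt_sq_eq_abs, Real.sqrt_sq_eq_abs] at h2
  refine ⟨hAbs, ?_⟩
  rw [Metric.tendsto_atTop]
  intro ε hε
  -- there is some time at which |η| < ε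
  have key : ∃ t₀ : ℝ, 0 ≤ t₀ ∧ |η t₀| < ε := by
    by_contra hcon
    push_neg at hcon
    set m := 2 * δ * k * (ε * (1 - Real.exp (-ε))) with hm
    have he : Real.exp (-ε) < 1 := Real.exp_lt_one_iff.mpr (by linarith)
    have hmpos : 0 < m := by
      rw [hm]
      exact mul_pos (mul_pos (mul_pos two_pos hδ) hk) (mul_pos hε (by linarith))
    have hG : ∀ t, 0 ≤ t → HasDerivAt (fun s => η s ^ 2 + m * s)
        (2 * η t * (-(c t) * k * (Real.exp (η t) - 1)) + m) t := by
      intro t ht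
      refine ((hW t ht).add ((hasDerivAt_id t).const_mul m)).congr_deriv ?_
      ring
    have hGanti : AntitoneOn (fun s => η s ^ 2 + m * s) (Set.Ici 0) := by
      apply antitoneOn_of_deriv_nonpos (convex_Ici 0)
      · exact fun t ht => ((hG t ht).continuousAt).continuousWithinAt
      · intro t ht
        rw [interior_Ici] at ht
        exact (hG t ht.le).differentiableAt.differentiableWithinAt
      · intro t ht
        rw [interior_Ici] at ht
        rw [(hG t ht.le).deriv]
        have h2 := key2 ε (η t) hε (hcon t ht.le)
        have hc1 := (hcb t ht.le).1
        have hck : 0 ≤ c t * k := mul_nonneg (le_trans hδ.le hc1) hk.le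
        have hA : 0 ≤ ε * (1 - Real.exp (-ε)) :=
          mul_nonneg hε.le (by linarith)
        have s1 : δ * k * (ε * (1 - Real.exp (-ε)))
            ≤ c t * k * (ε * (1 - Real.exp (-ε))) :=
          mul_le_mul_of_nonneg_right (mul_le_mul_of_nonneg_right hc1 hk.le) hA
        have s2 : c t * k * (ε * (1 - Real.exp (-ε)))
            ≤ c t * k * (η t * (Real.exp (η t) - 1)) :=
          mul_le_mul_of_nonneg_left h2 hck
        rw [hm]
        nlinarith [s1, s2]
    have hT : 0 < (η 0 ^ 2 + 1) / m := div_pos (by positivity) hmpos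
    have hchain := hGanti (self_mem_Ici) (mem_Ici.mpr hT.le) hT.le
    have hmT : m * ((η 0 ^ 2 + 1) / m) = η 0 ^ 2 + 1 :=
      mul_div_cancel₀ _ (ne_of_gt hmpos)
    simp only at hchain
    nlinarith [sq_nonneg (η ((η 0 ^ 2 + 1) / m)), hchain, hmT]
  obtain ⟨t₀, ht₀, hlt⟩ := key
  refine ⟨t₀, fun t ht => ?_⟩
  rw [Real.dist_eq, sub_zero]
  exact lt_of_le_of_lt (hAbs (mem_Ici.mpr ht₀) (mem_Ici.mpr (le_trans ht₀ ht)) ht) hlt
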